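/- In the Crank–Nicolson finite element scheme for the LLBar system, with ψ(x,y) := ½(|x|²+|y|²)(x+y)/2, the discrete energy identity holds: (1/2)(‖∇u_h^{n+1}‖² − ‖∇u_h^n‖²) + (κ/4)(‖u_h^{n+1}‖⁴_{L⁴} − ‖u_h^n‖⁴_{L⁴}) − (κμ/2)(‖u_h^{n+1}‖² − ‖u_h^n‖²) + (β/2)(‖e·u_h^{n+1}‖² − ‖e·u_h^n‖²) + kλ_r‖H_h^{n+1/2}‖² + kλ_e‖∇H_h^{n+1/2}‖² = 0. Consequently the corresponding discrete energy is exactly conservative up to the dissipation terms, and E(u_h^{n+1}) ≤ E(u_h^n) for any k > 0. -/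

import Mathlib

open MeasureTheory
open scoped RealInnerProductSpace

/-- The cross product on `ℝ³ = EuclideanSpace ℝ (Fin 3)`. -/
noncomputable def cross3 (a b : EuclideanSpace ℝ (Fin 3)) : EuclideanSpace ℝ (Fin 3) :=
  (WithLp.equiv 2 (Fin 3 → ℝ)).symm
    (crossProduct ((WithLp.equiv 2 (Fin 3 → ℝ)) a) ((WithLp.equiv 2 (Fin 3 → ℝ)) b))

/-- The Crank–Nicolson discretization `ψ(x,y) = ½(|x|²+|y|²)·((x+y)/2)` of `|u|²u`. -/
noncomputable def cnCubic (x y : EuclideanSpace ℝ (Fin 3)) : EuclideanSpace ℝ (Fin 3) :=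
  ((1 / 2 : ℝ) * (‖x‖ ^ 2 + ‖y‖ ^ 2)) • ((1 / 2 : ℝ) • (x + y))

/-- The micromagnetic energy
`E(u) = ½‖∇u‖² + (κ/4)‖u‖⁴_{L⁴} − (κμ/2)‖u‖²_{L²} + (β/2)‖e·u‖²_{L²}`,
with the gradient `∇u` supplied as data `g` valued in an inner product space `F`. -/
noncomputable def llbarEnergy' {α : Type*} [MeasurableSpace α]
    {F : Type*} [NormedAddCommGroup F] [InnerProductSpace ℝ F]
    (μm : Measure α) (κ μ0 β : ℝ) (e : EuclideanSpace ℝ (Fin 3))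
    (g : α → F) (u : α → EuclideanSpace ℝ (Fin 3)) : ℝ :=
  (1 / 2) * ∫ x, ‖g x‖ ^ 2 ∂μm + (κ / 4) * ∫ x, ‖u x‖ ^ 4 ∂μm -
    (κ * μ0 / 2) * ∫ x, ‖u x‖ ^ 2 ∂μm + (β / 2) * ∫ x, (⟪e, u x⟫) ^ 2 ∂μm

/-- `⟪a × b, b⟫ = 0`. -/
lemma cross3_inner_self_right (a b : EuclideanSpace ℝ (Fin 3)) :
    ⟪cross3 a b, b⟫ = 0 := by
  simp only [cross3, PiLp.inner_apply, RCLike.inner_apply, conj_trivial, Fin.sum_univ_three,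
    PiLp.toLp_apply, crossProduct, LinearMap.mk₂_apply]
  simp [Matrix.cons_val_zero, Matrix.cons_val_one]
  ring

/-- Integrability of powers of norms of bounded measurable functions. -/
lemma integrable_norm_pow {α : Type*} [MeasurableSpace α] (μm : Measure α) [IsFiniteMeasure μm]
    {F : Type*} [NormedAddCommGroup F] [InnerProductSpace ℝ F]
    (f : α → F) (M : ℝ) (n : ℕ) (hm : AEStronglyMeasurable f μm) (hb : ∀ x, ‖f x‖ ≤ M) :
    Integrable (fun x => ‖f x‖ ^ n) μm := by
  refine (integrable_const (M ^ n)).mono' ((continuous_pow n).comp_aestronglyMeasurable hm.norm)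
    (ae_of_all _ fun x => ?_)
  simp only [Real.norm_eq_abs, abs_pow, abs_norm]
  exact pow_le_pow_left₀ (norm_nonneg _) (hb x) n

lemma integrable_inner_sq {α : Type*} [MeasurableSpace α] (μm : Measure α) [IsFiniteMeasure μm]
    (e : EuclideanSpace ℝ (Fin 3))
    (f : α → EuclideanSpace ℝ (Fin 3)) (M : ℝ) (hm : AEStronglyMeasurable f μm)
    (hb : ∀ x, ‖f x‖ ≤ M) :
    Integrable (fun x => (⟪e, f x⟫) ^ 2) μm := by
  have hc : AEStronglyMeasurable (fun x => (⟪e, f x⟫ : ℝ)) μm :=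
    (innerSL ℝ e).continuous.comp_aestronglyMeasurable hm
  refine (integrable_const ((‖e‖ * M) ^ 2)).mono'
    ((continuous_pow 2).comp_aestronglyMeasurable hc) (ae_of_all _ fun x => ?_)
  simp only [Real.norm_eq_abs, abs_pow]
  refine pow_le_pow_left₀ (abs_nonneg _) ?_ 2
  calc |⟪e, f x⟫| ≤ ‖e‖ * ‖f x‖ := abs_real_inner_le_norm _ _
    _ ≤ ‖e‖ * M := by nlinarith [norm_nonneg e, hb x, norm_nonneg (f x)]

lemma cn_inner_sum_diff {F : Type*} [NormedAddCommGroup F] [InnerProductSpace ℝ F]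
    (k : ℝ) (a b : F) :
    ⟪(1 / 2 : ℝ) • (b + a), k⁻¹ • (b - a)⟫ = (1 / (2 * k)) * (‖b‖ ^ 2 - ‖a‖ ^ 2) := by
  rw [real_inner_smul_left, real_inner_smul_right, inner_add_left, inner_sub_right,
    inner_sub_right, real_inner_self_eq_norm_sq, real_inner_self_eq_norm_sq,
    real_inner_comm a b]
  ring

lemma cnCubic_inner_diff (k : ℝ) (a b : EuclideanSpace ℝ (Fin 3)) :
    ⟪cnCubic a b, k⁻¹ • (b - a)⟫ = (1 / (4 * k)) * (‖b‖ ^ 4 - ‖a‖ ^ 4) := by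
  rw [cnCubic, real_inner_smul_left, real_inner_smul_left, real_inner_smul_right,
    inner_add_left, inner_sub_right, inner_sub_right, real_inner_self_eq_norm_sq,
    real_inner_self_eq_norm_sq, real_inner_comm a b]
  ring

lemma e_inner_prod_diff (k : ℝ) (e a b : EuclideanSpace ℝ (Fin 3)) :
    ⟪e, (1 / 2 : ℝ) • (b + a)⟫ * ⟪e, k⁻¹ • (b - a)⟫ =
      (1 / (2 * k)) * ((⟪e, b⟫) ^ 2 - (⟪e, a⟫) ^ 2) := by
  rw [real_inner_smul_right, real_inner_smul_right, inner_add_right, inner_sub_right]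
  ring

/-- Discrete energy identity for the Crank–Nicolson finite element scheme for the LLBar
system.  Here `u0 = u_h^n`, `u1 = u_h^{n+1}`, `Hn = H_h^{n+1/2}`, `uhat = û_h^{n−1/2}`,
with gradients `g0, g1, gH`; the scheme equations tested with `χ = H_h^{n+1/2}` and
`φ = δu_h^{n+1/2} = (u1 − u0)/k` are assumed.  Then
`½(‖∇u1‖²−‖∇u0‖²) + (κ/4)(‖u1‖⁴_{L⁴}−‖u0‖⁴_{L⁴}) − (κμ/2)(‖u1‖²−‖u0‖²)
 + (β/2)(‖e·u1‖²−‖e·u0‖²) + kλ_r‖H^{n+1/2}‖² + kλ_e‖∇H^{n+1/2}‖² = 0`,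
and consequently `E(u_h^{n+1}) ≤ E(u_h^n)` for any `k > 0`. -/
theorem crank_nicolson_energy_identity
    {α : Type*} [MeasurableSpace α] (μm : Measure α) [IsFiniteMeasure μm]
    {F : Type*} [NormedAddCommGroup F] [InnerProductSpace ℝ F]
    (u0 u1 uhat Hn : α → EuclideanSpace ℝ (Fin 3)) (g0 g1 gH : α → F)
    (e : EuclideanSpace ℝ (Fin 3)) (he : ‖e‖ = 1)
    (k lr le' κ μ0 β γ : ℝ)
    (hk : 0 < k) (hlr : 0 < lr) (hle : 0 < le') (hκ : 0 < κ)
    -- regularity: measurability and boundedness of all fields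
    (hmu0 : AEStronglyMeasurable u0 μm) (hmu1 : AEStronglyMeasurable u1 μm)
    (hmuh : AEStronglyMeasurable uhat μm) (hmH : AEStronglyMeasurable Hn μm)
    (hmg0 : AEStronglyMeasurable g0 μm) (hmg1 : AEStronglyMeasurable g1 μm)
    (hmgH : AEStronglyMeasurable gH μm)
    (hbd : ∃ M, ∀ x, ‖u0 x‖ ≤ M ∧ ‖u1 x‖ ≤ M ∧ ‖uhat x‖ ≤ M ∧ ‖Hn x‖ ≤ M ∧
      ‖g0 x‖ ≤ M ∧ ‖g1 x‖ ≤ M ∧ ‖gH x‖ ≤ M)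
    -- first scheme equation tested with χ = H_h^{n+1/2}
    (hsch1 : ∫ x, ⟪k⁻¹ • (u1 x - u0 x), Hn x⟫ ∂μm =
      lr * ∫ x, ‖Hn x‖ ^ 2 ∂μm + le' * ∫ x, ‖gH x‖ ^ 2 ∂μm -
        γ * ∫ x, ⟪cross3 (uhat x) (Hn x), Hn x⟫ ∂μm)
    -- second scheme equation tested with φ = δu_h^{n+1/2}
    (hsch2 : ∫ x, ⟪Hn x, k⁻¹ • (u1 x - u0 x)⟫ ∂μm =
      -(∫ x, ⟪(1 / 2 : ℝ) • (g1 x + g0 x), k⁻¹ • (g1 x - g0 x)⟫ ∂μm) +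
        κ * μ0 * ∫ x, ⟪(1 / 2 : ℝ) • (u1 x + u0 x), k⁻¹ • (u1 x - u0 x)⟫ ∂μm -
        κ * ∫ x, ⟪cnCubic (u0 x) (u1 x), k⁻¹ • (u1 x - u0 x)⟫ ∂μm -
        β * ∫ x, ⟪e, (1 / 2 : ℝ) • (u1 x + u0 x)⟫ * ⟪e, k⁻¹ • (u1 x - u0 x)⟫ ∂μm) :
    (1 / 2) * ((∫ x, ‖g1 x‖ ^ 2 ∂μm) - ∫ x, ‖g0 x‖ ^ 2 ∂μm) +
      (κ / 4) * ((∫ x, ‖u1 x‖ ^ 4 ∂μm) - ∫ x, ‖u0 x‖ ^ 4 ∂μm) -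
      (κ * μ0 / 2) * ((∫ x, ‖u1 x‖ ^ 2 ∂μm) - ∫ x, ‖u0 x‖ ^ 2 ∂μm) +
      (β / 2) * ((∫ x, (⟪e, u1 x⟫) ^ 2 ∂μm) - ∫ x, (⟪e, u0 x⟫) ^ 2 ∂μm) +
      k * lr * ∫ x, ‖Hn x‖ ^ 2 ∂μm + k * le' * ∫ x, ‖gH x‖ ^ 2 ∂μm = 0 ∧
    llbarEnergy' μm κ μ0 β e g1 u1 ≤ llbarEnergy' μm κ μ0 β e g0 u0 := by
  obtain ⟨M, hM⟩ := hbd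
  have hk' : k ≠ 0 := hk.ne'
  -- integrability
  have iG0 := integrable_norm_pow μm g0 M 2 hmg0 fun x => (hM x).2.2.2.2.1
  have iG1 := integrable_norm_pow μm g1 M 2 hmg1 fun x => (hM x).2.2.2.2.2.1
  have iU0sq := integrable_norm_pow μm u0 M 2 hmu0 fun x => (hM x).1
  have iU1sq := integrable_norm_pow μm u1 M 2 hmu1 fun x => (hM x).2.1
  have iU04 := integrable_norm_pow μm u0 M 4 hmu0 fun x => (hM x).1
  have iU14 := integrable_norm_pow μm u1 M 4 hmu1 fun x => (hM x).2.1
  have iP0 := integrable_inner_sq μm e u0 M hmu0 fun x => (hM x).1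
  have iP1 := integrable_inner_sq μm e u1 M hmu1 fun x => (hM x).2.1
  -- the cross term vanishes
  have hcross : (∫ x, ⟪cross3 (uhat x) (Hn x), Hn x⟫ ∂μm) = 0 := by
    simp only [cross3_inner_self_right, integral_zero]
  -- the two left-hand sides agree
  have hsym : (∫ x, ⟪k⁻¹ • (u1 x - u0 x), Hn x⟫ ∂μm) =
      ∫ x, ⟪Hn x, k⁻¹ • (u1 x - u0 x)⟫ ∂μm := by
    simp_rw [real_inner_comm]
  -- rewrite the four integrals on the right of hsch2
  have hg : (∫ x, ⟪(1 / 2 : ℝ) • (g1 x + g0 x), k⁻¹ • (g1 x - g0 x)⟫ ∂μm) =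
      (1 / (2 * k)) * ((∫ x, ‖g1 x‖ ^ 2 ∂μm) - ∫ x, ‖g0 x‖ ^ 2 ∂μm) := by
    simp_rw [cn_inner_sum_diff]
    rw [integral_const_mul, integral_sub iG1 iG0]
  have hu : (∫ x, ⟪(1 / 2 : ℝ) • (u1 x + u0 x), k⁻¹ • (u1 x - u0 x)⟫ ∂μm) =
      (1 / (2 * k)) * ((∫ x, ‖u1 x‖ ^ 2 ∂μm) - ∫ x, ‖u0 x‖ ^ 2 ∂μm) := by
    simp_rw [cn_inner_sum_diff]
    rw [integral_const_mul, integral_sub iU1sq iU0sq]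
  have hq : (∫ x, ⟪cnCubic (u0 x) (u1 x), k⁻¹ • (u1 x - u0 x)⟫ ∂μm) =
      (1 / (4 * k)) * ((∫ x, ‖u1 x‖ ^ 4 ∂μm) - ∫ x, ‖u0 x‖ ^ 4 ∂μm) := by
    simp_rw [cnCubic_inner_diff]
    rw [integral_const_mul, integral_sub iU14 iU04]
  have hp : (∫ x, ⟪e, (1 / 2 : ℝ) • (u1 x + u0 x)⟫ * ⟪e, k⁻¹ • (u1 x - u0 x)⟫ ∂μm) =
      (1 / (2 * k)) * ((∫ x, (⟪e, u1 x⟫) ^ 2 ∂μm) - ∫ x, (⟪e, u0 x⟫) ^ 2 ∂μm) := by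
    simp_rw [e_inner_prod_diff]
    rw [integral_const_mul, integral_sub iP1 iP0]
  rw [hcross, mul_zero, sub_zero] at hsch1
  simp only [llbarEnergy']
  rw [hg, hu, hq, hp] at hsch2
  set A := ∫ x, ‖Hn x‖ ^ 2 ∂μm with hA
  set B := ∫ x, ‖gH x‖ ^ 2 ∂μm with hB
  set G0 := ∫ x, ‖g0 x‖ ^ 2 ∂μm with hG0
  set G1 := ∫ x, ‖g1 x‖ ^ 2 ∂μm with hG1
  set U0 := ∫ x, ‖u0 x‖ ^ 2 ∂μm with hU0
  set U1 := ∫ x, ‖u1 x‖ ^ 2 ∂μm with hU1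
  set Q0 := ∫ x, ‖u0 x‖ ^ 4 ∂μm with hQ0
  set Q1 := ∫ x, ‖u1 x‖ ^ 4 ∂μm with hQ1
  set P0 := ∫ x, (⟪e, u0 x⟫) ^ 2 ∂μm with hP0
  set P1 := ∫ x, (⟪e, u1 x⟫) ^ 2 ∂μm with hP1
  clear_value A B G0 G1 U0 U1 Q0 Q1 P0 P1
  have key : lr * A + le' * B = -(1 / (2 * k) * (G1 - G0)) +
      κ * μ0 * (1 / (2 * k) * (U1 - U0)) - κ * (1 / (4 * k) * (Q1 - Q0)) -
      β * (1 / (2 * k) * (P1 - P0)) := by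
    rw [← hsch1, hsym, hsch2]
  have key2 : (1 / 2) * (G1 - G0) + (κ / 4) * (Q1 - Q0) - (κ * μ0 / 2) * (U1 - U0) +
      (β / 2) * (P1 - P0) + k * lr * A + k * le' * B = 0 := by
    have hm : k * (lr * A + le' * B) = k * (-(1 / (2 * k) * (G1 - G0)) +
        κ * μ0 * (1 / (2 * k) * (U1 - U0)) - κ * (1 / (4 * k) * (Q1 - Q0)) -
        β * (1 / (2 * k) * (P1 - P0))) := by rw [key]
    have hr : k * (-(1 / (2 * k) * (G1 - G0)) +
        κ * μ0 * (1 / (2 * k) * (U1 - U0)) - κ * (1 / (4 * k) * (Q1 - Q0)) -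
        β * (1 / (2 * k) * (P1 - P0))) =
        -(1 / 2) * (G1 - G0) + κ * μ0 / 2 * (U1 - U0) - κ / 4 * (Q1 - Q0) -
        β / 2 * (P1 - P0) := by
      field_simp
    linear_combination hm.trans hr
  refine ⟨key2, ?_⟩
  have hAnn : 0 ≤ A := by
    rw [hA]; exact integral_nonneg fun x => by positivity
  have hBnn : 0 ≤ B := by
    rw [hB]; exact integral_nonneg fun x => by positivity
  have h1 : 0 ≤ k * lr * A := mul_nonneg (mul_nonneg hk.le hlr.le) hAnn
  have h2 : 0 ≤ k * le' * B := mul_nonneg (mul_nonneg hk.le hle.le) hBnn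
  linarith [key2]
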